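/- For all positive integers α and β and all y ∈ [0,1], the CDF of the Beta(α, β) distribution at y equals 1 minus the CDF of the Binomial(α+β−1, y) distribution at α−1; that is, F^{beta}_{α,β}(y) = 1 − F^{B}_{α+β−1, y}(α−1). -/

import Mathlib

open MeasureTheory Real

/-- pmf of the Binomial(n,p) distribution. -/
noncomputable def binPMF (n : ℕ) (p : ℝ) (s : ℕ) : ℝ :=
  (n.choose s : ℝ) * p ^ s * (1 - p) ^ (n - s)

/-- CDF of the Binomial(n,p) distribution, evaluated at an integer argument
(so that the convention `F(-1) = 0` makes sense). -/
noncomputable def binCDF (n : ℕ) (p : ℝ) (s : ℤ) : ℝ :=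
  ∑ k ∈ Finset.range (s + 1).toNat, binPMF n p k

/-- pdf of the Beta(a,b) distribution (for positive integer parameters). -/
noncomputable def betaPDF (a b : ℕ) (x : ℝ) : ℝ :=
  if 0 < x ∧ x < 1 then
    (Real.Gamma (a + b) / (Real.Gamma a * Real.Gamma b)) * x ^ (a - 1) * (1 - x) ^ (b - 1)
  else 0

/-- CDF of the Beta(a,b) distribution. -/
noncomputable def betaCDF (a b : ℕ) (y : ℝ) : ℝ :=
  ∫ x in Set.Iic y, betaPDF a b x

/-- Derivative of a single binomial pmf term in `p`. -/
lemma term_deriv (n k : ℕ) (p : ℝ) :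
    HasDerivAt (fun q => binPMF n q k)
      ((n.choose k : ℝ) * ((k : ℝ) * p ^ (k - 1) * (1 - p) ^ (n - k)
        - ((n - k : ℕ) : ℝ) * p ^ k * (1 - p) ^ (n - k - 1))) p := by
  have h1 : HasDerivAt (fun q : ℝ => q ^ k) ((k : ℝ) * p ^ (k - 1)) p := hasDerivAt_pow k p
  have h2 : HasDerivAt (fun q : ℝ => (1 - q) ^ (n - k))
      (-(((n - k : ℕ) : ℝ) * (1 - p) ^ (n - k - 1))) p := by
    have := (hasDerivAt_pow (n - k) (1 - p)).comp p
      ((hasDerivAt_const p (1 : ℝ)).sub (hasDerivAt_id p))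
    exact this.congr_deriv (by ring)
  have := ((h1.mul h2).const_mul (n.choose k : ℝ))
  refine (this.congr_deriv (by ring)).congr_of_eventuallyEq (Filter.Eventually.of_forall fun q => ?_)
  simp [binPMF, mul_assoc]

/-- Telescoping derivative of the binomial CDF in `p`. -/
lemma sum_deriv (N : ℕ) (p : ℝ) : ∀ m ≤ N,
    HasDerivAt (fun q => ∑ k ∈ Finset.range (m + 1), binPMF (N + 1) q k)
      (-(((N : ℝ) + 1) * (N.choose m : ℝ) * p ^ m * (1 - p) ^ (N - m))) p := by
  intro m
  induction m with
  | zero =>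
    intro _
    have := term_deriv (N + 1) 0 p
    convert this using 1
    · ext q; simp [Finset.sum_range_one]
    · simp
  | succ m ih =>
    intro hm
    have h := (ih (by omega)).add (term_deriv (N + 1) (m + 1) p)
    refine (h.congr_deriv (Eq.symm ?_)).congr_of_eventuallyEq (Filter.Eventually.of_forall fun q => ?_)
    · have e1 : N + 1 - (m + 1) = N - m := by omega
      have e2 : N + 1 - (m + 1) - 1 = N - (m + 1) := by omega
      have c1 : ((N + 1).choose (m + 1) : ℝ) * ((m : ℝ) + 1) = ((N : ℝ) + 1) * (N.choose m : ℝ) := by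
        have h1 : ((N + 1) * N.choose m : ℕ) = ((N + 1).choose (m + 1) * (m + 1) : ℕ) :=
          Nat.add_one_mul_choose_eq N m
        exact_mod_cast h1.symm
      have c2 : ((N + 1).choose (m + 1) : ℝ) * (((N - m : ℕ)) : ℝ)
          = ((N : ℝ) + 1) * (N.choose (m + 1) : ℝ) := by
        have h2 : (N.choose (m + 1) * (N + 1) : ℕ) = ((N + 1).choose (m + 1) * (N + 1 - (m + 1)) : ℕ) :=
          Nat.choose_mul_succ_eq N (m + 1)
        rw [e1] at h2
        have h3 : ((N + 1).choose (m + 1) * (N - m) : ℕ) = (N + 1) * N.choose (m + 1) := by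
          rw [← h2]; ring
        exact_mod_cast h3
      rw [e2, e1]
      simp only [Nat.add_sub_cancel]
      push_cast
      linear_combination -(p ^ m * (1 - p) ^ (N - m)) * c1
        + (p ^ (m + 1) * (1 - p) ^ (N - (m + 1))) * c2
    · simp only [Pi.add_apply]; rw [Finset.sum_range_succ]

/-- for positive integers α, β and y ∈ [0,1],
`F^beta_{α,β}(y) = 1 − F^B_{α+β−1, y}(α−1)`. -/
theorem beta_binomial_identity (α β : ℕ) (hα : 0 < α) (hβ : 0 < β)
    (y : ℝ) (hy : y ∈ Set.Icc (0 : ℝ) 1) :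
    betaCDF α β y = 1 - binCDF (α + β - 1) y ((α : ℤ) - 1) := by
  obtain ⟨m, rfl⟩ : ∃ m, α = m + 1 := ⟨α - 1, by omega⟩
  obtain ⟨b, rfl⟩ : ∃ b, β = b + 1 := ⟨β - 1, by omega⟩
  obtain ⟨hy0, hy1⟩ := hy
  set N := m + b with hNdef
  set P : ℝ → ℝ := fun x => ((N : ℝ) + 1) * (N.choose m : ℝ) * x ^ m * (1 - x) ^ b with hP
  -- the normalizing constant
  have hc : Real.Gamma (((m + 1 : ℕ) : ℝ) + ((b + 1 : ℕ) : ℝ)) /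
      (Real.Gamma ((m + 1 : ℕ) : ℝ) * Real.Gamma ((b + 1 : ℕ) : ℝ))
      = ((N : ℝ) + 1) * (N.choose m : ℝ) := by
    have h1 : (((m + 1 : ℕ) : ℝ) + ((b + 1 : ℕ) : ℝ)) = ((N + 1 : ℕ) : ℝ) + 1 := by
      push_cast [hNdef]; ring
    have h2 : ((m + 1 : ℕ) : ℝ) = (m : ℝ) + 1 := by push_cast; ring
    have h3 : ((b + 1 : ℕ) : ℝ) = (b : ℝ) + 1 := by push_cast; ring
    rw [h1, h2, h3, Real.Gamma_nat_eq_factorial, Real.Gamma_nat_eq_factorial,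
      Real.Gamma_nat_eq_factorial]
    rw [div_eq_iff (by positivity)]
    have key : (N + 1).factorial = (N + 1) * (N.choose m * m.factorial * b.factorial) := by
      rw [Nat.factorial_succ, ← Nat.choose_mul_factorial_mul_factorial (show m ≤ N by omega),
        show N - m = b by omega]
    have := congrArg (Nat.cast : ℕ → ℝ) key
    push_cast at this
    linear_combination this
  have hbeta : ∀ x : ℝ, 0 < x → x < 1 → betaPDF (m + 1) (b + 1) x = P x := by
    intro x h0 h1
    have hx : 0 < x ∧ x < 1 := ⟨h0, h1⟩
    simp only [betaPDF, if_pos hx, Nat.add_sub_cancel, hc, hP]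
  have hPcont : Continuous P := by fun_prop
  have hzero : Set.EqOn (betaPDF (m + 1) (b + 1)) (fun _ => (0 : ℝ)) (Set.Iic 0) := by
    intro x hx
    simp only [betaPDF, Set.mem_Iic] at hx ⊢
    rw [if_neg (by rintro ⟨h1, _⟩; linarith)]
  have hEqOn : Set.EqOn (betaPDF (m + 1) (b + 1)) P (Set.Ioo 0 y) := fun x hx =>
    hbeta x hx.1 (lt_of_lt_of_le hx.2 hy1)
  have hint2 : IntegrableOn (betaPDF (m + 1) (b + 1)) (Set.Ioc 0 y) := by
    rw [integrableOn_Ioc_iff_integrableOn_Ioo]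
    exact ((hPcont.integrableOn_Icc (a := 0) (b := y)).mono_set
      Set.Ioo_subset_Icc_self).congr_fun (fun x hx => (hEqOn hx).symm) measurableSet_Ioo
  have hint1 : IntegrableOn (betaPDF (m + 1) (b + 1)) (Set.Iic 0) :=
    integrableOn_zero.congr_fun (fun x hx => (hzero hx).symm) measurableSet_Iic
  -- reduce betaCDF to an interval integral of P
  have hred : betaCDF (m + 1) (b + 1) y = ∫ x in (0:ℝ)..y, P x := by
    rw [betaCDF, ← Set.Iic_union_Ioc_eq_Iic hy0,
      setIntegral_union (Set.Iic_disjoint_Ioc le_rfl) measurableSet_Ioc hint1 hint2,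
      setIntegral_congr_fun measurableSet_Iic hzero, integral_zero, zero_add,
      integral_Ioc_eq_integral_Ioo, setIntegral_congr_fun measurableSet_Ioo hEqOn,
      ← integral_Ioc_eq_integral_Ioo, intervalIntegral.integral_of_le hy0]
  -- FTC
  have hderiv : ∀ x ∈ Set.uIcc (0:ℝ) y,
      HasDerivAt (fun q => -(∑ k ∈ Finset.range (m + 1), binPMF (N + 1) q k)) (P x) x := by
    intro x _
    have := (sum_deriv N x m (by omega)).neg
    exact this.congr_deriv (by simp [hP, hNdef, Nat.add_sub_cancel_left])
  have hftc := intervalIntegral.integral_eq_sub_of_hasDerivAt hderiv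
    (hPcont.intervalIntegrable 0 y)
  have hG0 : ∑ k ∈ Finset.range (m + 1), binPMF (N + 1) 0 k = 1 := by
    rw [Finset.sum_eq_single 0]
    · simp [binPMF]
    · intro k _ hk0; simp [binPMF, zero_pow hk0]
    · intro h; exact absurd (Finset.mem_range.2 (by omega)) h
  have hRHS : binCDF (m + 1 + (b + 1) - 1) y (((m + 1 : ℕ) : ℤ) - 1)
      = ∑ k ∈ Finset.range (m + 1), binPMF (N + 1) y k := by
    have h1 : m + 1 + (b + 1) - 1 = N + 1 := by omega
    have h2 : ((((m + 1 : ℕ) : ℤ) - 1 + 1).toNat) = m + 1 := by simp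
    rw [binCDF, h1, h2]
  rw [hred, hftc, hRHS, hG0]
  ring
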